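/- Let l be a natural number and let z₂ < z₁ < z₃ be real numbers. Then ∫_{z₂}^{z₁} p_l(z; z₁, z₂) · (z − z₃)^{−2l−2} dz = ( (z₁ − z₃)(z₂ − z₃) )^{−l−1}, where p_l(z; z₁, z₂) = ((2l+1)! / ((l!)² (z₁−z₂)^{2l+1})) · (z₁−z)^l (z−z₂)^l. -/

import Mathlib

open intervalIntegral Set

lemma beta_nat : ∀ (n m : ℕ), (∫ x in (0:ℝ)..1, x ^ m * (1 - x) ^ n)
    = (Nat.factorial m * Nat.factorial n : ℝ) / Nat.factorial (m + n + 1) := by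
  intro n
  induction n with
  | zero =>
    intro m
    simp only [pow_zero, mul_one, integral_pow, one_pow, Nat.add_zero]
    rw [zero_pow (by omega : m + 1 ≠ 0), sub_zero, Nat.factorial_succ, Nat.factorial_zero]
    have h1 : (m : ℝ) + 1 ≠ 0 := by positivity
    have h2 : (Nat.factorial m : ℝ) ≠ 0 := by exact_mod_cast Nat.factorial_ne_zero m
    push_cast
    field_simp
  | succ n ih =>
    intro m
    have hu : ∀ x ∈ uIcc (0:ℝ) 1, HasDerivAt (fun x : ℝ => (1 - x) ^ (n + 1))
        (-(((n:ℝ) + 1) * (1 - x) ^ n)) x := by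
      intro x _
      have h := (((hasDerivAt_id x).const_sub 1).pow (n + 1))
      refine h.congr_deriv ?_
      push_cast
      simp [mul_comm]
    have hv : ∀ x ∈ uIcc (0:ℝ) 1, HasDerivAt (fun x : ℝ => x ^ (m + 1) / ((m:ℝ) + 1))
        (x ^ m) x := by
      intro x _
      have h := (hasDerivAt_pow (m + 1) x).div_const ((m:ℝ) + 1)
      refine h.congr_deriv ?_
      have : (m : ℝ) + 1 ≠ 0 := by positivity
      push_cast
      field_simp
    have hparts := intervalIntegral.integral_mul_deriv_eq_deriv_mul hu hv
      (by apply Continuous.intervalIntegrable; fun_prop)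
      (by apply Continuous.intervalIntegrable; fun_prop)
    have hL : (∫ x in (0:ℝ)..1, x ^ m * (1 - x) ^ (n + 1))
        = ∫ x in (0:ℝ)..1, (1 - x) ^ (n + 1) * x ^ m := by
      apply intervalIntegral.integral_congr
      intro x _
      simp [mul_comm]
    rw [hL, hparts]
    have hR : (∫ x in (0:ℝ)..1, -(((n:ℝ) + 1) * (1 - x) ^ n) * (x ^ (m + 1) / ((m:ℝ) + 1)))
        = (-((n:ℝ) + 1) / ((m:ℝ) + 1)) * ∫ x in (0:ℝ)..1, x ^ (m + 1) * (1 - x) ^ n := by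
      rw [← intervalIntegral.integral_const_mul]
      apply intervalIntegral.integral_congr
      intro x _
      have : (m : ℝ) + 1 ≠ 0 := by positivity
      field_simp
    rw [hR, ih (m + 1)]
    have e1 : m + 1 + n + 1 = m + n + 2 := by omega
    have e2 : m + (n + 1) + 1 = m + n + 2 := by omega
    rw [e1, e2, Nat.factorial_succ (m), Nat.factorial_succ (n)]
    have h1 : (m : ℝ) + 1 ≠ 0 := by positivity
    have h3 : (Nat.factorial (m + n + 2) : ℝ) ≠ 0 := by
      exact_mod_cast Nat.factorial_ne_zero _
    have h4 : (Nat.factorial m : ℝ) ≠ 0 := by exact_mod_cast Nat.factorial_ne_zero m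
    have h5 : (Nat.factorial n : ℝ) ≠ 0 := by exact_mod_cast Nat.factorial_ne_zero n
    push_cast
    rw [zero_pow (by omega : m + 1 ≠ 0), sub_self]
    rw [zero_pow (by omega : n + 1 ≠ 0)]
    field_simp
    ring

lemma beta_scaled (l : ℕ) (c : ℝ) : (∫ u in (0:ℝ)..c, u ^ l * (c - u) ^ l)
    = c ^ (2 * l + 1) * ((Nat.factorial l * Nat.factorial l : ℝ) / Nat.factorial (2 * l + 1)) := by
  have h := intervalIntegral.smul_integral_comp_mul_left
    (a := (0:ℝ)) (b := 1) (fun u => u ^ l * (c - u) ^ l) c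
  simp only [mul_zero, mul_one] at h
  rw [← h]
  have heq : (∫ x in (0:ℝ)..1, (c * x) ^ l * (c - c * x) ^ l)
      = c ^ (2 * l) * ∫ x in (0:ℝ)..1, x ^ l * (1 - x) ^ l := by
    rw [← intervalIntegral.integral_const_mul]
    apply intervalIntegral.integral_congr
    intro x _
    show (c * x) ^ l * (c - c * x) ^ l = c ^ (2 * l) * (x ^ l * (1 - x) ^ l)
    rw [show c - c * x = c * (1 - x) from by ring, mul_pow, mul_pow]
    ring
  rw [heq, beta_nat l l]
  have hidx : l + l + 1 = 2 * l + 1 := by omega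
  rw [hidx, smul_eq_mul]
  ring

/-- for `z₂ < z₁ < z₃`,
`∫_{z₂}^{z₁} p_l(z; z₁, z₂) · (z − z₃)^{−2l−2} dz = ((z₁ − z₃)(z₂ − z₃))^{−l−1}`,
where `p_l(z; z₁, z₂) = ((2l+1)!/((l!)²(z₁−z₂)^{2l+1}))·(z₁−z)^l(z−z₂)^l`. -/
theorem stmt_3 (l : ℕ) (z₁ z₂ z₃ : ℝ) (h21 : z₂ < z₁) (h13 : z₁ < z₃) :
    ∫ z in z₂..z₁,
        ((Nat.factorial (2 * l + 1) : ℝ) /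
            ((Nat.factorial l : ℝ) ^ 2 * (z₁ - z₂) ^ (2 * l + 1)))
          * ((z₁ - z) ^ l * (z - z₂) ^ l) * ((z - z₃) ^ (2 * l + 2))⁻¹
      = (((z₁ - z₃) * (z₂ - z₃)) ^ (l + 1))⁻¹ := by
  have hA : z₁ - z₂ ≠ 0 := sub_ne_zero.mpr h21.ne'
  have hB : z₁ - z₃ ≠ 0 := sub_ne_zero.mpr h13.ne
  have hD : z₂ - z₃ ≠ 0 := sub_ne_zero.mpr (h21.trans h13).ne
  have hfl : (Nat.factorial l : ℝ) ≠ 0 := by exact_mod_cast Nat.factorial_ne_zero l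
  have hfl2 : (Nat.factorial (2 * l + 1) : ℝ) ≠ 0 := by
    exact_mod_cast Nat.factorial_ne_zero _
  have huIcc : uIcc z₂ z₁ = Icc z₂ z₁ := uIcc_of_le h21.le
  have hz3 : ∀ z ∈ uIcc z₂ z₁, z - z₃ ≠ 0 := by
    intro z hz
    rw [huIcc] at hz
    exact sub_ne_zero.mpr (hz.2.trans_lt h13).ne
  set C : ℝ := (Nat.factorial (2 * l + 1) : ℝ) /
      ((Nat.factorial l : ℝ) ^ 2 * (z₁ - z₂) ^ (2 * l + 1)) with hC
  set K : ℝ := C / (z₂ - z₃) ^ (l + 1) with hK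
  set g : ℝ → ℝ := fun u => u ^ l * ((z₁ - z₂) - (z₁ - z₃) * u) ^ l with hg
  set f : ℝ → ℝ := fun z => (z - z₂) / (z - z₃) with hf
  set f' : ℝ → ℝ := fun z => (z₂ - z₃) / (z - z₃) ^ 2 with hf'
  have hder : ∀ z ∈ uIcc z₂ z₁, HasDerivAt f (f' z) z := by
    intro z hz
    have hne := hz3 z hz
    have h := ((hasDerivAt_id z).sub_const z₂).div ((hasDerivAt_id z).sub_const z₃) hne
    refine h.congr_deriv ?_
    simp only [id_eq]
    congr 1
    ring
  have hcont : ContinuousOn f' (uIcc z₂ z₁) := by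
    apply ContinuousOn.div continuousOn_const
    · fun_prop
    · intro z hz
      exact pow_ne_zero 2 (hz3 z hz)
  have hgc : Continuous g := by fun_prop
  have key := intervalIntegral.integral_comp_smul_deriv hder hcont hgc
  have hf2 : f z₂ = 0 := by simp [hf]
  have hf1 : f z₁ = (z₁ - z₂) / (z₁ - z₃) := rfl
  rw [hf2, hf1] at key
  simp only [Function.comp] at key
  have heqOn : EqOn
      (fun z => C * ((z₁ - z) ^ l * (z - z₂) ^ l) * ((z - z₃) ^ (2 * l + 2))⁻¹)
      (fun z => K • (f' z • g (f z))) (uIcc z₂ z₁) := by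
    intro z hz
    have hne := hz3 z hz
    simp only [hf, hf', hg, hK, smul_eq_mul]
    have key2 : (z₁ - z₂) - (z₁ - z₃) * ((z - z₂) / (z - z₃))
        = (z₁ - z) * (z₂ - z₃) / (z - z₃) := by
      field_simp
      ring
    rw [key2, div_pow, div_pow, mul_pow]
    field_simp
    ring
  calc ∫ z in z₂..z₁,
        C * ((z₁ - z) ^ l * (z - z₂) ^ l) * ((z - z₃) ^ (2 * l + 2))⁻¹
      = ∫ z in z₂..z₁, K • (f' z • g (f z)) := intervalIntegral.integral_congr heqOn
    _ = K • ∫ z in z₂..z₁, f' z • g (f z) := intervalIntegral.integral_smul K _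
    _ = K • ∫ u in (0:ℝ)..((z₁ - z₂) / (z₁ - z₃)), g u := by rw [key]
    _ = (((z₁ - z₃) * (z₂ - z₃)) ^ (l + 1))⁻¹ := by
        set c : ℝ := (z₁ - z₂) / (z₁ - z₃) with hc
        have hgu : (∫ u in (0:ℝ)..c, g u)
            = (z₁ - z₃) ^ l * ∫ u in (0:ℝ)..c, u ^ l * (c - u) ^ l := by
          rw [← intervalIntegral.integral_const_mul]
          apply intervalIntegral.integral_congr
          intro u _
          simp only [hg]
          have hAc : z₁ - z₂ = (z₁ - z₃) * c := by
            rw [hc]; field_simp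
          rw [hAc]
          have : (z₁ - z₃) * c - (z₁ - z₃) * u = (z₁ - z₃) * (c - u) := by ring
          rw [this, mul_pow]
          ring
        rw [hgu, beta_scaled l c, hc, div_pow, smul_eq_mul, hK, hC]
        apply eq_inv_of_mul_eq_one_right
        rw [mul_pow]
        field_simp
        ring
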